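/- Let A be the (w+2)×(w+2) adjacency-type matrix (with parameter z = e^{it}) of the transducer computing the w-NAF Hamming weight: states 0, 1, …, w+1 with transitions 0→0 on input 0 (weight 1), 0→1 (i.e., 0 to the chain) on input 1 with entry z starting a chain of w−1 forced states, the chain ending in two states w and w+1 according to a carry bit, each looping or returning to states 0 or 1. Then the characteristic polynomial of A is (x − 1)(x^w − x^{w−1} − 2^{w−1} z), where z = e^{it}. -/

import Mathlib

open Polynomial

/-- The weighted adjacency matrix (with `z = e^{it}`) of the transducer
computing the Hamming weight of the width-`w` NAF: two looping states `0`
(initial, carry 0) and `1` (carry 1), each looping with weight `1` and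
entering the chain of `w−1` forced states `2, …, w` with a nonzero output
(weight `z`); inside the chain both input digits lead forward (weight `2`),
and from the last chain state the transducer returns to state `0` or `1`
according to the carry bit. -/
noncomputable def wNAFMatrix (w : ℕ) (z : ℂ) : Matrix (Fin (w + 1)) (Fin (w + 1)) ℂ :=
  Matrix.of fun i j : Fin (w + 1) =>
    if (i : ℕ) = 0 ∧ (j : ℕ) = 0 then 1
    else if (i : ℕ) = 1 ∧ (j : ℕ) = 1 then 1
    else if ((i : ℕ) = 0 ∨ (i : ℕ) = 1) ∧ (j : ℕ) = 2 then z
    else if 2 ≤ (i : ℕ) ∧ (i : ℕ) ≤ w - 1 ∧ (j : ℕ) = (i : ℕ) + 1 then 2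
    else if (i : ℕ) = w ∧ ((j : ℕ) = 0 ∨ (j : ℕ) = 1) then 1
    else 0

namespace WNAFAux

open Matrix Equiv

variable {w : ℕ} {z : ℂ}

lemma val_one' (hw : 2 ≤ w) : ((1 : Fin (w+1)) : ℕ) = 1 := by simp; omega

lemma wNAF_eq_zero (i j : Fin (w+1))
    (h1 : ¬((i:ℕ) = 0 ∧ (j:ℕ) = 0))
    (h2 : ¬((i:ℕ) = 1 ∧ (j:ℕ) = 1))
    (h3 : ¬(((i:ℕ) = 0 ∨ (i:ℕ) = 1) ∧ (j:ℕ) = 2))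
    (h4 : ¬(2 ≤ (i:ℕ) ∧ (i:ℕ) ≤ w - 1 ∧ (j:ℕ) = (i:ℕ) + 1))
    (h5 : ¬((i:ℕ) = w ∧ ((j:ℕ) = 0 ∨ (j:ℕ) = 1))) :
    wNAFMatrix w z i j = 0 := by
  simp only [wNAFMatrix, Matrix.of_apply, if_neg h1, if_neg h2, if_neg h3, if_neg h4, if_neg h5]

lemma wNAF_eq_one_a (i j : Fin (w+1)) (hi : (i:ℕ) = 0) (hj : (j:ℕ) = 0) :
    wNAFMatrix w z i j = 1 := by
  simp only [wNAFMatrix, Matrix.of_apply]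
  rw [if_pos ⟨hi, hj⟩]

lemma wNAF_eq_one_b (i j : Fin (w+1)) (hi : (i:ℕ) = 1) (hj : (j:ℕ) = 1) :
    wNAFMatrix w z i j = 1 := by
  simp only [wNAFMatrix, Matrix.of_apply]
  rw [if_neg (by omega), if_pos ⟨hi, hj⟩]

lemma wNAF_eq_one_c (i j : Fin (w+1)) (hw : 2 ≤ w) (hi : (i:ℕ) = w)
    (hj : (j:ℕ) = 0 ∨ (j:ℕ) = 1) :
    wNAFMatrix w z i j = 1 := by
  simp only [wNAFMatrix, Matrix.of_apply]
  rw [if_neg (by omega), if_neg (by omega), if_neg (by omega), if_neg (by omega),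
    if_pos ⟨hi, hj⟩]

lemma wNAF_eq_z (i j : Fin (w+1)) (hi : (i:ℕ) = 0 ∨ (i:ℕ) = 1) (hj : (j:ℕ) = 2) :
    wNAFMatrix w z i j = z := by
  simp only [wNAFMatrix, Matrix.of_apply]
  rw [if_neg (by omega), if_neg (by omega), if_pos ⟨hi, hj⟩]

lemma wNAF_eq_two (i j : Fin (w+1)) (hi2 : 2 ≤ (i:ℕ)) (hiw : (i:ℕ) ≤ w - 1)
    (hj : (j:ℕ) = (i:ℕ) + 1) :
    wNAFMatrix w z i j = 2 := by
  simp only [wNAFMatrix, Matrix.of_apply]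
  rw [if_neg (by omega), if_neg (by omega), if_neg (by omega), if_pos ⟨hi2, hiw, hj⟩]

lemma charM_zero (i j : Fin (w+1)) (hne : (i:ℕ) ≠ (j:ℕ))
    (h1 : ¬((i:ℕ) = 0 ∧ (j:ℕ) = 0))
    (h2 : ¬((i:ℕ) = 1 ∧ (j:ℕ) = 1))
    (h3 : ¬(((i:ℕ) = 0 ∨ (i:ℕ) = 1) ∧ (j:ℕ) = 2))
    (h4 : ¬(2 ≤ (i:ℕ) ∧ (i:ℕ) ≤ w - 1 ∧ (j:ℕ) = (i:ℕ) + 1))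
    (h5 : ¬((i:ℕ) = w ∧ ((j:ℕ) = 0 ∨ (j:ℕ) = 1))) :
    charmatrix (wNAFMatrix w z) i j = 0 := by
  rw [charmatrix_apply_ne _ _ _ (fun h => hne (by rw [h])),
    wNAF_eq_zero i j h1 h2 h3 h4 h5, map_zero, neg_zero]

/-- row permutation for the `e₀` matrix -/
def ρ0 (w : ℕ) : Perm (Fin (w+1)) := Equiv.swap 0 1 * Equiv.swap 0 (Fin.last w)
/-- column permutation for the `e₀` matrix -/
def γ0 (w : ℕ) : Perm (Fin (w+1)) := Equiv.swap 0 1 * finRotate (w+1)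
/-- row permutation for the `e₁` matrix -/
def ρ1 (w : ℕ) : Perm (Fin (w+1)) := Equiv.swap 0 (Fin.last w)
/-- column permutation for the `e₁` matrix -/
def γ1 (w : ℕ) : Perm (Fin (w+1)) := finRotate (w+1)

lemma ne01 (hw : 2 ≤ w) : (0 : Fin (w+1)) ≠ 1 :=
  Fin.ne_of_val_ne (by rw [Fin.val_zero, val_one' hw]; omega)

lemma ne0last (hw : 2 ≤ w) : (0 : Fin (w+1)) ≠ Fin.last w :=
  Fin.ne_of_val_ne (by rw [Fin.val_zero, Fin.val_last]; omega)

lemma rho0_coe (hw : 2 ≤ w) (k : Fin (w+1)) :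
    ((ρ0 w k : Fin (w+1)) : ℕ) =
      if (k:ℕ) = 0 then w else if (k:ℕ) = 1 then 0 else if (k:ℕ) = w then 1 else k := by
  have h1 := val_one' hw
  have hk := k.isLt
  simp only [ρ0, Perm.mul_apply, Equiv.swap_apply_def]
  split_ifs <;>
    simp only [Fin.ext_iff, Fin.val_zero, Fin.val_last, h1] at * <;> first | omega | tauto

lemma gamma0_coe (hw : 2 ≤ w) (l : Fin (w+1)) :
    ((γ0 w l : Fin (w+1)) : ℕ) =
      if (l:ℕ) = 0 then 0 else if (l:ℕ) = w then 1 else (l:ℕ) + 1 := by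
  have h1 := val_one' hw
  have hk := l.isLt
  have hadd : ((l + 1 : Fin (w+1)) : ℕ) = if (l:ℕ) = w then 0 else (l:ℕ) + 1 := by
    rw [Fin.val_add_one]
    split_ifs <;> simp only [Fin.ext_iff, Fin.val_last] at * <;> first | rfl | omega
  simp only [γ0, Perm.mul_apply, finRotate_succ_apply, Equiv.swap_apply_def]
  split_ifs <;>
    simp only [Fin.ext_iff, Fin.val_zero, Fin.val_last, h1, hadd] at * <;>
    (try split_ifs at *) <;> first | omega | tauto

lemma rho1_coe (hw : 2 ≤ w) (k : Fin (w+1)) :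
    ((ρ1 w k : Fin (w+1)) : ℕ) =
      if (k:ℕ) = 0 then w else if (k:ℕ) = w then 0 else k := by
  have hk := k.isLt
  simp only [ρ1, Equiv.swap_apply_def]
  split_ifs <;>
    simp only [Fin.ext_iff, Fin.val_zero, Fin.val_last] at * <;> first | omega | tauto

lemma gamma1_coe (hw : 2 ≤ w) (l : Fin (w+1)) :
    ((γ1 w l : Fin (w+1)) : ℕ) =
      if (l:ℕ) = w then 0 else (l:ℕ) + 1 := by
  have hk := l.isLt
  have hadd : ((l + 1 : Fin (w+1)) : ℕ) = if (l:ℕ) = w then 0 else (l:ℕ) + 1 := by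
    rw [Fin.val_add_one]
    split_ifs <;> simp only [Fin.ext_iff, Fin.val_last] at * <;> first | rfl | omega
  simp only [γ1, finRotate_succ_apply, hadd]

lemma prod_diag (hw : 2 ≤ w) (f : Fin (w+1) → ℂ[X]) (a b c d : ℂ[X])
    (h0 : ∀ k : Fin (w+1), (k:ℕ) = 0 → f k = a)
    (h1 : ∀ k : Fin (w+1), (k:ℕ) = 1 → f k = b)
    (hm : ∀ k : Fin (w+1), 2 ≤ (k:ℕ) → (k:ℕ) ≤ w - 1 → f k = c)
    (hl : ∀ k : Fin (w+1), (k:ℕ) = w → f k = d) :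
    ∏ k, f k = a * b * c^(w-2) * d := by
  set F : ℕ → ℂ[X] := fun m => if m = 0 then a else if m = 1 then b else c with hF
  rw [Fin.prod_univ_castSucc, hl (Fin.last w) (Fin.val_last w)]
  congr 1
  calc ∏ i : Fin w, f i.castSucc = ∏ i : Fin w, F (i : ℕ) := by
        refine Finset.prod_congr rfl fun i _ => ?_
        have hi := i.isLt
        by_cases hi0 : (i:ℕ) = 0
        · rw [h0 _ (by simp [hi0]), hF]; simp [hi0]
        · by_cases hi1 : (i:ℕ) = 1
          · rw [h1 _ (by simp [hi1]), hF]; simp [hi1]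
          · rw [hm _ (by simp; omega) (by simp; omega), hF]
            simp only [if_neg hi0, if_neg hi1]
    _ = ∏ m ∈ Finset.range w, F m := Fin.prod_univ_eq_prod_range F w
    _ = (∏ m ∈ Finset.Ico 0 2, F m) * ∏ m ∈ Finset.Ico 2 w, F m := by
        rw [Finset.prod_Ico_consecutive F (by omega) hw, Finset.range_eq_Ico]
    _ = a * b * c^(w-2) := by
        have e1 : (Finset.Ico 0 2 : Finset ℕ) = {0, 1} := by decide
        have e2 : ∏ m ∈ Finset.Ico 2 w, F m = c^(w-2) := by
          rw [Finset.prod_congr rfl (fun x hx => ?_), Finset.prod_const, Nat.card_Ico]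
          rw [Finset.mem_Ico] at hx
          show F x = c
          rw [hF]; simp only []; rw [if_neg (by omega), if_neg (by omega)]
        rw [e1, e2, Finset.prod_pair (by omega)]
        show F 0 * F 1 * _ = _
        rw [hF]
        norm_num

lemma det_B2 (hw : 2 ≤ w) :
    ((charmatrix (wNAFMatrix w z)).updateRow (Fin.last w) (Pi.single (Fin.last w) 1)).det
      = (X - 1)^2 * X^(w-2) := by
  have htri : ((charmatrix (wNAFMatrix w z)).updateRow (Fin.last w)
      (Pi.single (Fin.last w) 1)).BlockTriangular id := by
    intro i j hij
    have hij' : (j:ℕ) < (i:ℕ) := hij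
    have hi := i.isLt
    rw [Matrix.updateRow_apply]
    by_cases hc : i = Fin.last w
    · rw [if_pos hc]
      exact Pi.single_eq_of_ne (Fin.ne_of_val_ne (by rw [Fin.val_last]; omega)) 1
    · rw [if_neg hc]
      have hcv : (i:ℕ) ≠ w := fun h => hc (Fin.ext (by rw [h, Fin.val_last]))
      apply charM_zero <;> omega
  rw [Matrix.det_of_upperTriangular htri,
    prod_diag hw _ (X - 1) (X - 1) X 1 ?h0 ?h1 ?hm ?hl]
  · ring
  case h0 =>
    intro k hk
    rw [Matrix.updateRow_apply, if_neg (Fin.ne_of_val_ne (by rw [hk, Fin.val_last]; omega)),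
      charmatrix_apply_eq, wNAF_eq_one_a k k hk hk, Polynomial.C_1]
  case h1 =>
    intro k hk
    rw [Matrix.updateRow_apply, if_neg (Fin.ne_of_val_ne (by rw [hk, Fin.val_last]; omega)),
      charmatrix_apply_eq, wNAF_eq_one_b k k hk hk, Polynomial.C_1]
  case hm =>
    intro k hk2 hkw
    rw [Matrix.updateRow_apply, if_neg (Fin.ne_of_val_ne (by rw [Fin.val_last]; omega)),
      charmatrix_apply_eq, wNAF_eq_zero k k (by omega) (by omega) (by omega) (by omega)
        (by omega), map_zero, sub_zero]
  case hl =>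
    intro k hk
    have : k = Fin.last w := Fin.ext (by rw [hk, Fin.val_last])
    subst this
    rw [Matrix.updateRow_self, Pi.single_eq_same]

lemma det_B0 (hw : 2 ≤ w) :
    ((charmatrix (wNAFMatrix w z)).updateRow (Fin.last w) (Pi.single 0 1)).det
      = C z * (X - 1) * 2^(w-2) := by
  set B := (charmatrix (wNAFMatrix w z)).updateRow (Fin.last w) (Pi.single 0 1) with hB
  have htri : ((B.submatrix (⇑(ρ0 w)) id).submatrix id (⇑(γ0 w))).BlockTriangular
      OrderDual.toDual := by
    intro i j hij
    have hij' : (i:ℕ) < (j:ℕ) := hij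
    have hρ := rho0_coe hw i
    have hγ := gamma0_coe hw j
    have hi := i.isLt
    have hj := j.isLt
    simp only [Matrix.submatrix_apply, id_eq]
    rw [hB, Matrix.updateRow_apply]
    by_cases hc : ρ0 w i = Fin.last w
    · rw [if_pos hc]
      have hcv : ((ρ0 w i : Fin (w+1)) : ℕ) = w := by rw [hc, Fin.val_last]
      refine Pi.single_eq_of_ne (Fin.ne_of_val_ne ?_) 1
      rw [Fin.val_zero]
      split_ifs at hρ hγ <;> omega
    · rw [if_neg hc]
      have hcv : ((ρ0 w i : Fin (w+1)) : ℕ) ≠ w := fun h => hc (Fin.ext (by rw [h, Fin.val_last]))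
      apply charM_zero <;> (split_ifs at hρ hγ <;> omega)
  have hdiag : ∏ k, ((B.submatrix (⇑(ρ0 w)) id).submatrix id (⇑(γ0 w))) k k
      = 1 * (-C z) * (-2)^(w-2) * (X - 1) := by
    refine prod_diag hw _ 1 (-C z) (-2) (X - 1) ?_ ?_ ?_ ?_
    · intro k hk
      have hρ := rho0_coe hw k
      have hγ := gamma0_coe hw k
      rw [if_pos hk] at hρ
      rw [if_pos hk] at hγ
      simp only [Matrix.submatrix_apply, id_eq]
      rw [hB, Matrix.updateRow_apply, if_pos (Fin.ext (by rw [hρ, Fin.val_last]))]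
      have : (γ0 w k : Fin (w+1)) = 0 := Fin.ext (by rw [hγ, Fin.val_zero])
      rw [this, Pi.single_eq_same]
    · intro k hk
      have hρ := rho0_coe hw k
      have hγ := gamma0_coe hw k
      rw [if_neg (by omega), if_pos hk] at hρ
      rw [if_neg (by omega), if_neg (by omega)] at hγ
      simp only [Matrix.submatrix_apply, id_eq]
      rw [hB, Matrix.updateRow_apply, if_neg (Fin.ne_of_val_ne (by rw [hρ, Fin.val_last]; omega)),
        charmatrix_apply_ne _ _ _ (Fin.ne_of_val_ne (by omega)),
        wNAF_eq_z _ _ (Or.inl hρ) (by omega)]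
    · intro k hk2 hkw
      have hρ := rho0_coe hw k
      have hγ := gamma0_coe hw k
      rw [if_neg (by omega), if_neg (by omega), if_neg (by omega)] at hρ
      rw [if_neg (by omega), if_neg (by omega)] at hγ
      simp only [Matrix.submatrix_apply, id_eq]
      rw [hB, Matrix.updateRow_apply, if_neg (Fin.ne_of_val_ne (by rw [hρ, Fin.val_last]; omega)),
        charmatrix_apply_ne _ _ _ (Fin.ne_of_val_ne (by omega)),
        wNAF_eq_two _ _ (by omega) (by omega) (by omega)]
      simp only [_root_.map_ofNat]
    · intro k hk
      have hρ := rho0_coe hw k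
      have hγ := gamma0_coe hw k
      rw [if_neg (by omega), if_neg (by omega), if_pos hk] at hρ
      rw [if_neg (by omega), if_pos hk] at hγ
      simp only [Matrix.submatrix_apply, id_eq]
      rw [hB, Matrix.updateRow_apply, if_neg (Fin.ne_of_val_ne (by rw [hρ, Fin.val_last]; omega))]
      have he : (ρ0 w k : Fin (w+1)) = γ0 w k := Fin.ext (by rw [hρ, hγ])
      rw [he, charmatrix_apply_eq, wNAF_eq_one_b _ _ (by rw [← he, hρ]) (by rw [← he, hρ]),
        Polynomial.C_1]
  have hT := Matrix.det_of_lowerTriangular _ htri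
  rw [hdiag] at hT
  rw [Matrix.det_permute', Matrix.det_permute] at hT
  have hsρ : Perm.sign (ρ0 w) = 1 := by
    rw [ρ0, Equiv.Perm.sign_mul, Equiv.Perm.sign_swap (ne01 hw), Equiv.Perm.sign_swap (ne0last hw)]
    simp
  have hsγ : Perm.sign (γ0 w) = (-1) * (-1)^w := by
    rw [γ0, Equiv.Perm.sign_mul, Equiv.Perm.sign_swap (ne01 hw), sign_finRotate, Nat.add_sub_cancel]
  rw [hsρ, hsγ] at hT
  obtain ⟨k, rfl⟩ : ∃ k, w = k + 2 := ⟨w - 2, by omega⟩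
  have hk2 : k + 2 - 2 = k := by omega
  rw [hk2] at hT ⊢
  rcases Nat.even_or_odd k with hpar | hpar
  · have e1 : ((-1 : ℤˣ))^(k+2) = 1 := (hpar.add (by decide : Even 2) : Even (k+2)).neg_one_pow
    have e2 : ((-2 : ℂ[X]))^k = 2^k := hpar.neg_pow 2
    rw [e1, e2] at hT
    simp only [mul_one, Units.val_neg, Units.val_one, Int.cast_neg, Int.cast_one, one_mul] at hT
    linear_combination -hT
  · have e1 : ((-1 : ℤˣ))^(k+2) = -1 := by
      have : Odd (k+2) := by rcases hpar with ⟨m, hm⟩; exact ⟨m+1, by omega⟩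
      exact this.neg_one_pow
    have e2 : ((-2 : ℂ[X]))^k = -(2^k) := hpar.neg_pow 2
    rw [e1, e2] at hT
    simp only [Units.val_neg, Units.val_one, Int.cast_neg, Int.cast_one, neg_mul, neg_neg,
      one_mul, mul_one, Units.val_mul] at hT
    linear_combination hT

lemma det_B1 (hw : 2 ≤ w) :
    ((charmatrix (wNAFMatrix w z)).updateRow (Fin.last w) (Pi.single 1 1)).det
      = C z * (X - 1) * 2^(w-2) := by
  set B := (charmatrix (wNAFMatrix w z)).updateRow (Fin.last w) (Pi.single 1 1) with hB
  have htri : ((B.submatrix (⇑(ρ1 w)) id).submatrix id (⇑(γ1 w))).BlockTriangular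
      OrderDual.toDual := by
    intro i j hij
    have hij' : (i:ℕ) < (j:ℕ) := hij
    have hρ := rho1_coe hw i
    have hγ := gamma1_coe hw j
    have hi := i.isLt
    have hj := j.isLt
    simp only [Matrix.submatrix_apply, id_eq]
    rw [hB, Matrix.updateRow_apply]
    by_cases hc : ρ1 w i = Fin.last w
    · rw [if_pos hc]
      have hcv : ((ρ1 w i : Fin (w+1)) : ℕ) = w := by rw [hc, Fin.val_last]
      refine Pi.single_eq_of_ne (Fin.ne_of_val_ne ?_) 1
      rw [val_one' hw]
      split_ifs at hρ hγ <;> omega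
    · rw [if_neg hc]
      have hcv : ((ρ1 w i : Fin (w+1)) : ℕ) ≠ w := fun h => hc (Fin.ext (by rw [h, Fin.val_last]))
      apply charM_zero <;> (split_ifs at hρ hγ <;> omega)
  have hdiag : ∏ k, ((B.submatrix (⇑(ρ1 w)) id).submatrix id (⇑(γ1 w))) k k
      = 1 * (-C z) * (-2)^(w-2) * (X - 1) := by
    refine prod_diag hw _ 1 (-C z) (-2) (X - 1) ?_ ?_ ?_ ?_
    · intro k hk
      have hρ := rho1_coe hw k
      have hγ := gamma1_coe hw k
      rw [if_pos hk] at hρ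
      rw [if_neg (by omega)] at hγ
      simp only [Matrix.submatrix_apply, id_eq]
      rw [hB, Matrix.updateRow_apply, if_pos (Fin.ext (by rw [hρ, Fin.val_last]))]
      have : (γ1 w k : Fin (w+1)) = 1 := Fin.ext (by rw [hγ, val_one' hw, hk])
      rw [this, Pi.single_eq_same]
    · intro k hk
      have hρ := rho1_coe hw k
      have hγ := gamma1_coe hw k
      rw [if_neg (by omega), if_neg (by omega)] at hρ
      rw [if_neg (by omega)] at hγ
      simp only [Matrix.submatrix_apply, id_eq]
      rw [hB, Matrix.updateRow_apply, if_neg (Fin.ne_of_val_ne (by rw [hρ, Fin.val_last]; omega)),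
        charmatrix_apply_ne _ _ _ (Fin.ne_of_val_ne (by omega)),
        wNAF_eq_z _ _ (Or.inr (by omega)) (by omega)]
    · intro k hk2 hkw
      have hρ := rho1_coe hw k
      have hγ := gamma1_coe hw k
      rw [if_neg (by omega), if_neg (by omega)] at hρ
      rw [if_neg (by omega)] at hγ
      simp only [Matrix.submatrix_apply, id_eq]
      rw [hB, Matrix.updateRow_apply, if_neg (Fin.ne_of_val_ne (by rw [hρ, Fin.val_last]; omega)),
        charmatrix_apply_ne _ _ _ (Fin.ne_of_val_ne (by omega)),
        wNAF_eq_two _ _ (by omega) (by omega) (by omega)]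
      simp only [_root_.map_ofNat]
    · intro k hk
      have hρ := rho1_coe hw k
      have hγ := gamma1_coe hw k
      rw [if_neg (by omega), if_pos hk] at hρ
      rw [if_pos hk] at hγ
      simp only [Matrix.submatrix_apply, id_eq]
      rw [hB, Matrix.updateRow_apply, if_neg (Fin.ne_of_val_ne (by rw [hρ, Fin.val_last]; omega))]
      have he : (ρ1 w k : Fin (w+1)) = γ1 w k := Fin.ext (by rw [hρ, hγ])
      rw [he, charmatrix_apply_eq, wNAF_eq_one_a _ _ (by rw [← he, hρ]) (by rw [← he, hρ]),
        Polynomial.C_1]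
  have hT := Matrix.det_of_lowerTriangular _ htri
  rw [hdiag] at hT
  rw [Matrix.det_permute', Matrix.det_permute] at hT
  have hsρ : Perm.sign (ρ1 w) = -1 := Equiv.Perm.sign_swap (ne0last hw)
  have hsγ : Perm.sign (γ1 w) = (-1)^w := by rw [γ1, sign_finRotate, Nat.add_sub_cancel]
  rw [hsρ, hsγ] at hT
  obtain ⟨k, rfl⟩ : ∃ k, w = k + 2 := ⟨w - 2, by omega⟩
  have hk2 : k + 2 - 2 = k := by omega
  rw [hk2] at hT ⊢
  rcases Nat.even_or_odd k with hpar | hpar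
  · have e1 : ((-1 : ℤˣ))^(k+2) = 1 := (hpar.add (by decide : Even 2) : Even (k+2)).neg_one_pow
    have e2 : ((-2 : ℂ[X]))^k = 2^k := hpar.neg_pow 2
    rw [e1, e2] at hT
    simp only [mul_one, Units.val_neg, Units.val_one, Int.cast_neg, Int.cast_one, one_mul] at hT
    linear_combination -hT
  · have e1 : ((-1 : ℤˣ))^(k+2) = -1 := by
      have : Odd (k+2) := by rcases hpar with ⟨m, hm⟩; exact ⟨m+1, by omega⟩
      exact this.neg_one_pow
    have e2 : ((-2 : ℂ[X]))^k = -(2^k) := hpar.neg_pow 2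
    rw [e1, e2] at hT
    simp only [Units.val_neg, Units.val_one, Int.cast_neg, Int.cast_one, neg_mul, neg_neg,
      one_mul, mul_one, Units.val_mul] at hT
    linear_combination hT

lemma row_last (hw : 2 ≤ w) :
    (charmatrix (wNAFMatrix w z)) (Fin.last w) =
      (-1 : ℂ[X]) • (Pi.single 0 1 : Fin (w+1) → ℂ[X]) +
        ((-1 : ℂ[X]) • (Pi.single 1 1 : Fin (w+1) → ℂ[X]) +
          (X : ℂ[X]) • (Pi.single (Fin.last w) 1 : Fin (w+1) → ℂ[X])) := by
  funext j
  have h1 := val_one' (w := w) hw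
  have hj := j.isLt
  simp only [Pi.add_apply, Pi.smul_apply, Pi.single_apply, smul_eq_mul]
  by_cases hj0 : (j:ℕ) = 0
  · have hj0' : j = 0 := Fin.ext (by rw [hj0, Fin.val_zero])
    rw [charmatrix_apply_ne _ _ _ (Fin.ne_of_val_ne (by rw [Fin.val_last, hj0]; omega)),
      wNAF_eq_one_c _ _ hw (Fin.val_last w) (Or.inl hj0), Polynomial.C_1]
    rw [if_pos hj0', if_neg (by rw [hj0']; exact ne01 hw), if_neg (by
      rw [hj0']; exact ne0last hw)]
    ring
  · by_cases hj1 : (j:ℕ) = 1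
    · have hj1' : j = 1 := Fin.ext (by rw [hj1, h1])
      rw [charmatrix_apply_ne _ _ _ (Fin.ne_of_val_ne (by rw [Fin.val_last, hj1]; omega)),
        wNAF_eq_one_c _ _ hw (Fin.val_last w) (Or.inr hj1), Polynomial.C_1]
      rw [if_neg (by rw [hj1']; exact (ne01 hw).symm), if_pos hj1',
        if_neg (Fin.ne_of_val_ne (by rw [hj1, Fin.val_last]; omega))]
      ring
    · by_cases hjw : (j:ℕ) = w
      · have hjw' : j = Fin.last w := Fin.ext (by rw [hjw, Fin.val_last])
        rw [hjw', charmatrix_apply_eq,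
          wNAF_eq_zero _ _ (by rw [Fin.val_last]; omega) (by rw [Fin.val_last]; omega)
            (by rw [Fin.val_last]; omega) (by rw [Fin.val_last]; omega)
            (by rw [Fin.val_last]; omega), map_zero, sub_zero]
        rw [if_neg (ne0last hw).symm, if_neg (Fin.ne_of_val_ne (by rw [Fin.val_last, h1]; omega)),
          if_pos rfl]
        ring
      · rw [charM_zero _ _ (by rw [Fin.val_last]; omega) (by rw [Fin.val_last]; omega)
          (by rw [Fin.val_last]; omega) (by rw [Fin.val_last]; omega)
          (by rw [Fin.val_last]; omega) (by rw [Fin.val_last]; omega)]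
        rw [if_neg (Fin.ne_of_val_ne (by rw [Fin.val_zero]; omega)),
          if_neg (Fin.ne_of_val_ne (by rw [h1]; omega)),
          if_neg (Fin.ne_of_val_ne (by rw [Fin.val_last]; omega))]
        ring

end WNAFAux

open WNAFAux

/-- The characteristic polynomial of the `w`-NAF weight transducer matrix is
`(x − 1)(x^w − x^(w−1) − 2^(w−1) z)` with `z = e^{it}`. -/
theorem wNAFMatrix_charpoly (w : ℕ) (hw : 2 ≤ w) (t : ℝ)
    (z : ℂ) (hz : z = Complex.exp (t * Complex.I)) :
    (wNAFMatrix w z).charpoly =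
      (X - 1) * (X ^ w - X ^ (w - 1) - C ((2 : ℂ) ^ (w - 1) * z)) := by

  clear hz
  show (Matrix.charmatrix (wNAFMatrix w z)).det = _
  conv_lhs => rw [← Matrix.updateRow_eq_self (Matrix.charmatrix (wNAFMatrix w z)) (Fin.last w)]
  rw [row_last hw, Matrix.det_updateRow_add, Matrix.det_updateRow_add,
    Matrix.det_updateRow_smul, Matrix.det_updateRow_smul, Matrix.det_updateRow_smul,
    det_B0 hw, det_B1 hw, det_B2 hw]
  obtain ⟨k, rfl⟩ : ∃ k, w = k + 2 := ⟨w - 2, by omega⟩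
  have hk1 : k + 2 - 1 = k + 1 := by omega
  have hk2 : k + 2 - 2 = k := by omega
  rw [hk1, hk2, map_mul, map_pow, map_ofNat]
  ring
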